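/- Consider the binary differential equation (ζ₄x + ζ₅y)dx dy + (ζ₃x + ζ₄y)dx² = 0 with ζ₅ ≠ 0 and ζ₄² − ζ₃ζ₅ ≠ 0. Then there exists an invertible linear change of coordinates x = βY (α=0 case), y = γX + δY, with β, γ, δ real, βγδ appropriately chosen, transforming the equation into Y dY² ± 2X dX dY = 0 (sign determined by the sign of ζ₅·(ζ₄² − ζ₃ζ₅)-data). Concretely: there exist reals β ≠ 0, γ, δ with δζ₅ + βζ₄ = 0, γ²ζ₅ = ±2, and β(δζ₄ + βζ₃) = ±1. -/

import Mathlib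

/-- the 1-jet of the binary differential equation of asymptotic lines,
(ζ₄x + ζ₅y)dx dy + (ζ₃x + ζ₄y)dx² = 0 with ζ₅ ≠ 0, ζ₄² − ζ₃ζ₅ ≠ 0, can be put in the
normal form Y dY² ± 2X dX dY = 0 by an invertible linear change x = βY, y = γX + δY:
there exist β ≠ 0, γ, δ with δζ₅ + βζ₄ = 0, γ²ζ₅ = ±2 and β(δζ₄ + βζ₃) = ±1. -/
theorem stmt_12 (ζ₃ ζ₄ ζ₅ : ℝ) (h₅ : ζ₅ ≠ 0) (hdisc : ζ₄^2 - ζ₃*ζ₅ ≠ 0) :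
    ∃ β γ δ : ℝ, β ≠ 0 ∧ γ ≠ 0 ∧
      δ*ζ₅ + β*ζ₄ = 0 ∧
      (γ^2*ζ₅ = 2 ∨ γ^2*ζ₅ = -2) ∧
      (β*(δ*ζ₄ + β*ζ₃) = 1 ∨ β*(δ*ζ₄ + β*ζ₃) = -1) := by
  set c : ℝ := (ζ₃*ζ₅ - ζ₄^2)/ζ₅ with hc
  have hcne : c ≠ 0 := by
    intro h
    apply hdisc
    have := (div_eq_zero_iff.mp h).resolve_right h₅
    linarith
  have hcabs : |c| > 0 := abs_pos.mpr hcne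
  set β : ℝ := 1/Real.sqrt |c| with hβ
  have hsq : Real.sqrt |c| > 0 := Real.sqrt_pos.mpr hcabs
  have hβne : β ≠ 0 := by positivity
  set γ : ℝ := Real.sqrt (2/|ζ₅|) with hγ
  have h5abs : |ζ₅| > 0 := abs_pos.mpr h₅
  have hγsq : γ^2 = 2/|ζ₅| := Real.sq_sqrt (by positivity)
  have hγne : γ ≠ 0 := by
    rw [hγ]
    positivity
  refine ⟨β, γ, -β*ζ₄/ζ₅, hβne, hγne, by field_simp; ring, ?_, ?_⟩
  · rw [hγsq]
    rcases abs_cases ζ₅ with ⟨h, _⟩ | ⟨h, _⟩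
    · left; rw [h]; field_simp
    · right; rw [h, div_neg, neg_mul, div_mul_cancel₀ _ h₅]
  · have hβsq : β^2 = 1/|c| := by
      rw [hβ, div_pow, one_pow, Real.sq_sqrt hcabs.le]
    have key : β*(-β*ζ₄/ζ₅*ζ₄ + β*ζ₃) = β^2 * c := by
      rw [hc]; field_simp; ring
    rw [key, hβsq]
    rcases abs_cases c with ⟨h, _⟩ | ⟨h, _⟩
    · left; rw [h]; field_simp
    · right; rw [h, div_neg, neg_mul, one_div_mul_cancel hcne]
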